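/- arXiv:2107.04185 — 2 statements merged into one kernel-verified Lean document; each statement's English description precedes it below -/
import Mathlib

section
/- Let a ∈ ℝ₊ⁿ be nonzero with B(a) a = a. Then a is in the core: there is no nonempty coalition S ⊆ {1,…,n} and action profile a' ∈ ℝ₊ⁿ with a'_j = 0 for all j ∉ S such that u_i(a') ≥ u_i(a) for all i ∈ S and u_i(a') > u_i(a) for some i ∈ S. -/
open Matrix

/-- The spectral radius of a real square matrix: the largest modulus of a
(complex) eigenvalue, i.e. of an element of the spectrum of the matrix viewed
over `ℂ`. -/
noncomputable def specRad {n : ℕ} (M : Matrix (Fin n) (Fin n) ℝ) : ℝ :=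
  sSup ((fun z : ℂ => ‖z‖) '' spectrum ℂ (M.map (Complex.ofReal : ℝ → ℂ)))

/-- The nonnegative orthant `ℝ₊ⁿ`, the domain of action profiles. -/
def nonnegOrthant (n : ℕ) : Set (Fin n → ℝ) := {x | ∀ i, 0 ≤ x i}

/-- The Jacobian matrix of the utility profile `u` at `a`:
`Jmat u a i j = ∂u_i/∂a_j (a)`. -/
noncomputable def Jmat {n : ℕ} (u : Fin n → (Fin n → ℝ) → ℝ) (a : Fin n → ℝ) :
    Matrix (Fin n) (Fin n) ℝ :=
  Matrix.of fun i j => fderiv ℝ (u i) a (Pi.single j 1)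

/-- The benefits matrix `B(a)`: `B_ij = J_ij / (-J_ii)` off the diagonal and
`B_ii = 0`. -/
noncomputable def Bmat {n : ℕ} (u : Fin n → (Fin n → ℝ) → ℝ) (a : Fin n → ℝ) :
    Matrix (Fin n) (Fin n) ℝ :=
  Matrix.of fun i j => if i = j then 0 else Jmat u a i j / (- Jmat u a i i)

/-- A nonnegative matrix is irreducible when every pair of indices is
connected by some power of the matrix. -/
def MatIrreducible {n : ℕ} (M : Matrix (Fin n) (Fin n) ℝ) : Prop :=
  ∀ i j, ∃ k : ℕ, 1 ≤ k ∧ 0 < (M ^ k) i j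

/-- `a` can be Pareto improved upon within the nonnegative orthant. -/
def ParetoImprovable {n : ℕ} (u : Fin n → (Fin n → ℝ) → ℝ) (a : Fin n → ℝ) : Prop :=
  ∃ a' : Fin n → ℝ, (∀ i, 0 ≤ a' i) ∧ (∀ i, u i a ≤ u i a') ∧ ∃ i, u i a < u i a'

open Set in
/-- Gradient inequality for concave functions on the orthant. -/
lemma grad_ineq_aux {n : ℕ} (f : (Fin n → ℝ) → ℝ)
    (hconc : ConcaveOn ℝ (nonnegOrthant n) f) (hdiff : ContDiff ℝ 1 f)
    (x y : Fin n → ℝ) (hx : x ∈ nonnegOrthant n) (hy : y ∈ nonnegOrthant n) :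
    f y ≤ f x + fderiv ℝ f x (y - x) := by
  set L : ℝ →ᵃ[ℝ] (Fin n → ℝ) := AffineMap.lineMap x y with hL
  have hLapp : ∀ t : ℝ, L t = x + t • (y - x) := by
    intro t
    simp [hL, AffineMap.lineMap_apply]
    abel
  have hIccsub : Icc (0:ℝ) 1 ⊆ L ⁻¹' nonnegOrthant n := by
    intro t ht i
    have h1 : (L t) i = (1 - t) * x i + t * y i := by
      rw [hLapp]
      simp [Pi.smul_apply, smul_eq_mul]
      ring
    have := hx i; have := hy i
    have ht0 := ht.1; have ht1 := ht.2
    show 0 ≤ (L t) i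
    rw [h1]; nlinarith
  have hcv : ConvexOn ℝ (Icc (0:ℝ) 1) ((fun z => -f z) ∘ L) :=
    ((hconc.neg).comp_affineMap L).subset hIccsub (convex_Icc 0 1)
  have hF : HasFDerivAt f (fderiv ℝ f x) x := ((hdiff.differentiable one_ne_zero) x).hasFDerivAt
  have hinner : HasDerivAt (fun t : ℝ => x + t • (y - x)) (y - x) 0 := by
    simpa using ((hasDerivAt_id (0:ℝ)).smul_const (y - x)).const_add x
  have h0 : x + (0:ℝ) • (y - x) = x := by simp
  have hF' : HasFDerivAt f (fderiv ℝ f x) (x + (0:ℝ) • (y - x)) := by rw [h0]; exact hF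
  have hg : HasDerivAt (fun t : ℝ => f (x + t • (y - x))) (fderiv ℝ f x (y - x)) 0 := by
    exact hF'.comp_hasDerivAt (0:ℝ) hinner
  have hgL : HasDerivAt ((fun z => -f z) ∘ L) (-(fderiv ℝ f x (y - x))) 0 := by
    have : ((fun z => -f z) ∘ L) = fun t : ℝ => -f (x + t • (y - x)) := by
      funext t; simp [hLapp t]
    rw [this]
    exact hg.neg
  have hslope := hcv.deriv_le_slope (x := 0) (y := 1)
    (by constructor <;> norm_num) (by constructor <;> norm_num) one_pos
    hgL.differentiableAt
  rw [hgL.deriv, slope_def_field] at hslope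
  have e0 : ((fun z => -f z) ∘ L) 0 = -f x := by simp [hLapp]
  have e1 : ((fun z => -f z) ∘ L) 1 = -f y := by simp [hLapp]
  rw [e0, e1] at hslope
  norm_num at hslope
  have hms : (fderiv ℝ f x) (y - x) = (fderiv ℝ f x) y - (fderiv ℝ f x) x := map_sub _ _ _
  linarith

/-- A continuous linear functional on `Fin n → ℝ` is determined by its values on basis vectors. -/
lemma clm_apply_eq_sum {n : ℕ} (D : (Fin n → ℝ) →L[ℝ] ℝ) (v : Fin n → ℝ) :
    D v = ∑ j, v j * D (Pi.single j 1) := by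
  have hv : v = ∑ j, v j • (Pi.single j 1 : Fin n → ℝ) := by
    ext k
    simp [Finset.sum_apply, Pi.single_apply]
  conv_lhs => rw [hv]
  rw [map_sum]
  simp [smul_eq_mul]

/-- Entrywise-nonnegative matrices have entrywise-nonnegative powers. -/
lemma pow_entry_nonneg {n : ℕ} (M : Matrix (Fin n) (Fin n) ℝ)
    (hM : ∀ i j, 0 ≤ M i j) : ∀ k i j, 0 ≤ (M ^ k) i j := by
  intro k
  induction k with
  | zero =>
    intro i j
    simp only [pow_zero, Matrix.one_apply]
    split <;> norm_num
  | succ m ih =>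
    intro i j
    rw [pow_succ, Matrix.mul_apply]
    exact Finset.sum_nonneg fun l _ => mul_nonneg (ih i l) (hM l j)

/-- Sum with the diagonal term removed. -/
lemma sum_ite_off_diag {n : ℕ} (i : Fin n) (f : Fin n → ℝ) :
    ∑ j, (if i = j then (0:ℝ) else f j) = (∑ j, f j) - f i := by
  have h1 := Finset.add_sum_erase Finset.univ
    (fun j => if i = j then (0:ℝ) else f j) (Finset.mem_univ i)
  have h2 := Finset.add_sum_erase Finset.univ f (Finset.mem_univ i)
  have h3 : ∑ j ∈ Finset.univ.erase i, (if i = j then (0:ℝ) else f j)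
      = ∑ j ∈ Finset.univ.erase i, f j := by
    apply Finset.sum_congr rfl
    intro j hj
    rw [if_neg (Ne.symm (Finset.mem_erase.mp hj).1)]
  simp only [eq_self_iff_true, if_true, zero_add] at h1
  rw [← h1, h3]
  linarith

/-- A nonzero nonnegative profile with the centrality property is in the
core: no nonempty coalition `S` has a deviation (with outsiders' actions set
to `0`) making all members of `S` weakly better off and some member strictly
better off. -/
theorem stmt12 {n : ℕ} (hn : 1 ≤ n)
    (u : Fin n → (Fin n → ℝ) → ℝ)
    (hconc : ∀ i, ConcaveOn ℝ (nonnegOrthant n) (u i))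
    (hdiff : ∀ i, ContDiff ℝ 1 (u i))
    (hCA : ∀ a ∈ nonnegOrthant n, ∀ i, Jmat u a i i < 0)
    (hPE : ∀ a ∈ nonnegOrthant n, ∀ i j, i ≠ j → 0 ≤ Jmat u a i j)
    (hirr : ∀ a ∈ nonnegOrthant n, MatIrreducible (Bmat u a))
    (a : Fin n → ℝ) (hnn : ∀ i, 0 ≤ a i) (hne : a ≠ 0)
    (hcent : Bmat u a *ᵥ a = a) :
    ¬ ∃ (S : Finset (Fin n)) (a' : Fin n → ℝ),
        S.Nonempty ∧ (∀ i, 0 ≤ a' i) ∧ (∀ j ∉ S, a' j = 0) ∧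
        (∀ i ∈ S, u i a ≤ u i a') ∧ ∃ i ∈ S, u i a < u i a' := by
  rintro ⟨S, a', -, ha'nn, ha'out, hweak, i0, hi0S, hstrict⟩
  haveI : Nonempty (Fin n) := Fin.pos_iff_nonempty.mp (by omega)
  have haO : a ∈ nonnegOrthant n := hnn
  have ha'O : a' ∈ nonnegOrthant n := ha'nn
  set B := Bmat u a with hBdef
  have hmv : ∀ (M : Matrix (Fin n) (Fin n) ℝ) (v : Fin n → ℝ) (i : Fin n),
      (M *ᵥ v) i = ∑ j, M i j * v j := fun M v i => rfl
  have hBnn : ∀ i j, 0 ≤ B i j := by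
    intro i j
    by_cases h : i = j
    · simp [hBdef, Bmat, h]
    · have h1 := hPE a haO i j h
      have h2 := hCA a haO i
      simp only [hBdef, Bmat, Matrix.of_apply, if_neg h]
      exact div_nonneg h1 (by linarith)
  have hBpownn := pow_entry_nonneg B hBnn
  -- expansion of B *ᵥ v
  have hexp : ∀ (i : Fin n) (v : Fin n → ℝ),
      (B *ᵥ v) i = ((∑ j, v j * Jmat u a i j) - v i * Jmat u a i i) / (- Jmat u a i i) := by
    intro i v
    have hd := hCA a haO i
    have hd' : (- Jmat u a i i) ≠ 0 := by linarith
    rw [hmv]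
    have hterm : ∀ j, B i j * v j
        = (if i = j then (0:ℝ) else v j * Jmat u a i j / (- Jmat u a i i)) := by
      intro j
      simp only [hBdef, Bmat, Matrix.of_apply]
      split <;> ring
    rw [Finset.sum_congr rfl fun j _ => hterm j,
      sum_ite_off_diag i (fun j => v j * Jmat u a i j / (- Jmat u a i i))]
    rw [sub_div, Finset.sum_div]
  -- centrality in J-form: ∑ j, a j * J i j = 0
  have hJa : ∀ i, ∑ j, a j * Jmat u a i j = 0 := by
    intro i
    have hd := hCA a haO i
    have hrow : (B *ᵥ a) i = a i := by rw [hcent]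
    rw [hexp i a] at hrow
    have hd' : (- Jmat u a i i) ≠ 0 := by linarith
    have hd'' : Jmat u a i i ≠ 0 := ne_of_lt hd
    field_simp at hrow
    linarith [hrow]
  -- gradient inequality in coordinates
  have hkey : ∀ i, u i a' ≤ u i a + ∑ j, a' j * Jmat u a i j := by
    intro i
    have h1 := grad_ineq_aux (u i) (hconc i) (hdiff i) a a' haO ha'O
    have h2 : fderiv ℝ (u i) a (a' - a) = ∑ j, (a' j - a j) * Jmat u a i j := by
      rw [clm_apply_eq_sum]
      apply Finset.sum_congr rfl
      intro j _
      simp [Pi.sub_apply, Jmat]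
    have h3 : ∑ j, (a' j - a j) * Jmat u a i j
        = (∑ j, a' j * Jmat u a i j) - ∑ j, a j * Jmat u a i j := by
      rw [← Finset.sum_sub_distrib]
      apply Finset.sum_congr rfl
      intro j _
      ring
    rw [h2, h3, hJa i, sub_zero] at h1
    exact h1
  set T : Fin n → ℝ := fun i => ∑ j, a' j * Jmat u a i j with hT
  have hTnn : ∀ i ∈ S, 0 ≤ T i := by
    intro i hi
    have := hweak i hi
    have := hkey i
    simp only [hT]
    linarith
  have hT0 : 0 < T i0 := by
    have := hkey i0
    simp only [hT]
    linarith
  -- a' ≤ B a' pointwise, strict at i0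
  have hle : ∀ i, a' i ≤ (B *ᵥ a') i := by
    intro i
    by_cases hiS : i ∈ S
    · have hTi := hTnn i hiS
      have hd := hCA a haO i
      rw [hexp i a', le_div_iff₀ (by linarith)]
      simp only [hT] at hTi
      nlinarith
    · rw [ha'out i hiS, hmv]
      exact Finset.sum_nonneg fun j _ => mul_nonneg (hBnn i j) (ha'nn j)
  have hlt : a' i0 < (B *ᵥ a') i0 := by
    have hd := hCA a haO i0
    rw [hexp i0 a', lt_div_iff₀ (by linarith)]
    simp only [hT] at hT0
    nlinarith
  -- strict positivity of a
  have hapos : ∀ i, 0 < a i := by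
    obtain ⟨j, hj⟩ : ∃ j, 0 < a j := by
      by_contra h
      push_neg at h
      exact hne (funext fun j => le_antisymm (h j) (hnn j))
    intro i
    obtain ⟨k, hk1, hkpos⟩ := hirr a haO i j
    have hpowa : ∀ m, (B ^ m) *ᵥ a = a := by
      intro m
      induction m with
      | zero => simp [Matrix.one_mulVec]
      | succ p ih => rw [pow_succ, ← Matrix.mulVec_mulVec, hcent, ih]
    have heq : ((B ^ k) *ᵥ a) i = a i := by rw [hpowa k]
    rw [hmv] at heq
    calc (0:ℝ) < (B ^ k) i j * a j := mul_pos hkpos hj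
      _ ≤ ∑ l, (B ^ k) i l * a l :=
        Finset.single_le_sum (fun l _ => mul_nonneg (hBpownn k i l) (hnn l)) (Finset.mem_univ j)
      _ = a i := heq
  -- maximal ratio
  obtain ⟨istar, -, hmax⟩ := Finset.exists_max_image Finset.univ (fun i => a' i / a i)
    Finset.univ_nonempty
  set s : ℝ := a' istar / a istar with hs
  have hles : ∀ i, a' i ≤ s * a i := by
    intro i
    have := hmax i (Finset.mem_univ i)
    exact (div_le_iff₀ (hapos i)).mp this
  set c : Fin n → ℝ := fun i => s * a i - a' i with hc
  have hcnn : ∀ i, 0 ≤ c i := by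
    intro i
    simp only [hc]
    linarith [hles i]
  have hcstar : c istar = 0 := by
    simp only [hc, hs]
    rw [div_mul_cancel₀ _ (hapos istar).ne']
    ring
  have hBc : ∀ i, (B *ᵥ c) i ≤ c i ∧ (0:ℝ) ≤ (B *ᵥ c) i := by
    intro i
    have h1 : (B *ᵥ c) i = s * (B *ᵥ a) i - (B *ᵥ a') i := by
      rw [hmv, hmv, hmv, Finset.mul_sum, ← Finset.sum_sub_distrib]
      apply Finset.sum_congr rfl
      intro j _
      simp only [hc]
      ring
    constructor
    · rw [h1, hcent]
      have := hle i
      simp only [hc]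
      linarith
    · rw [hmv]
      exact Finset.sum_nonneg fun j _ => mul_nonneg (hBnn i j) (hcnn j)
  have hc0pos : 0 < c i0 := by
    have h1 : (B *ᵥ c) i0 = s * (B *ᵥ a) i0 - (B *ᵥ a') i0 := by
      rw [hmv, hmv, hmv, Finset.mul_sum, ← Finset.sum_sub_distrib]
      apply Finset.sum_congr rfl
      intro j _
      simp only [hc]
      ring
    have h2 : (B *ᵥ c) i0 < c i0 := by
      rw [h1, hcent]
      simp only [hc]
      linarith [hlt]
    exact lt_of_le_of_lt (hBc i0).2 h2
  have hiter : ∀ m i, ((B ^ m) *ᵥ c) i ≤ c i := by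
    intro m
    induction m with
    | zero => intro i; simp [Matrix.one_mulVec]
    | succ p ih =>
      intro i
      have h1 : ((B ^ (p + 1)) *ᵥ c) i = ∑ j, B i j * ((B ^ p) *ᵥ c) j := by
        rw [pow_succ', ← Matrix.mulVec_mulVec, hmv]
      rw [h1]
      calc ∑ j, B i j * ((B ^ p) *ᵥ c) j ≤ ∑ j, B i j * c j :=
            Finset.sum_le_sum fun j _ => mul_le_mul_of_nonneg_left (ih j) (hBnn i j)
        _ = (B *ᵥ c) i := (hmv B c i).symm
        _ ≤ c i := (hBc i).1
  obtain ⟨k, hk1, hkpos⟩ := hirr a haO istar i0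
  have hsingle : (B ^ k) istar i0 * c i0 ≤ ((B ^ k) *ᵥ c) istar := by
    rw [hmv]
    exact Finset.single_le_sum (fun l _ => mul_nonneg (hBpownn k istar l) (hcnn l))
      (Finset.mem_univ i0)
  have hfin := hiter k istar
  nlinarith [mul_pos hkpos hc0pos]
end

section
/- Fix an agent i, and let B^{[−i]}(0) denote the matrix obtained from B(0) by setting every entry in row i and column i to zero. Suppose r(B(0)) > 1 and r(B^{[−i]}(0)) < 1. Then (a) there exists a ∈ ℝ₊ⁿ with u_j(a) ≥ u_j(0) for all j and u_j(a) > u_j(0) for some j (a Pareto improvement on 0 exists when i participates); and (b) there is no a ∈ ℝ₊ⁿ with a_i = 0 such that u_j(a) ≥ u_j(0) for all j ≠ i and u_j(a) > u_j(0) for some j ≠ i (no Pareto improvement for the other agents exists when i's action is fixed at 0). -/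
open Matrix

open Filter Topology

section Helpers

attribute [local instance] Matrix.linftyOpNormedRing Matrix.linftyOpNormedAlgebra

variable {n : ℕ}

lemma spec_compact (M : Matrix (Fin n) (Fin n) ℝ) :
    IsCompact ((fun z : ℂ => ‖z‖) '' spectrum ℂ (M.map (Complex.ofReal : ℝ → ℂ))) :=
  (spectrum.isCompact _).image continuous_norm

lemma abs_le_specRad {M : Matrix (Fin n) (Fin n) ℝ} {z : ℂ}
    (hz : z ∈ spectrum ℂ (M.map (Complex.ofReal : ℝ → ℂ))) :
    ‖z‖ ≤ specRad M :=
  le_csSup (spec_compact M).bddAbove ⟨z, hz, rfl⟩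

lemma exists_gt_of_specRad_gt {M : Matrix (Fin n) (Fin n) ℝ} {c : ℝ} (hc0 : 0 ≤ c)
    (hc : c < specRad M) :
    ∃ z ∈ spectrum ℂ (M.map (Complex.ofReal : ℝ → ℂ)), c < ‖z‖ := by
  by_cases hne : (spectrum ℂ (M.map (Complex.ofReal : ℝ → ℂ))).Nonempty
  · have h2 : ((fun z : ℂ => ‖z‖) '' spectrum ℂ (M.map (Complex.ofReal : ℝ → ℂ))).Nonempty :=
      hne.image _
    have := (spec_compact M).sSup_mem h2
    obtain ⟨z, hz, hz2⟩ := this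
    refine ⟨z, hz, ?_⟩
    have : ‖z‖ = specRad M := hz2
    linarith
  · exfalso
    rw [Set.not_nonempty_iff_eq_empty] at hne
    have : specRad M = 0 := by simp [specRad, hne, Real.sSup_empty]
    linarith

lemma exists_eigenvector {M : Matrix (Fin n) (Fin n) ℝ} {z : ℂ}
    (hz : z ∈ spectrum ℂ (M.map (Complex.ofReal : ℝ → ℂ))) :
    ∃ v : Fin n → ℂ, v ≠ 0 ∧ (M.map (Complex.ofReal : ℝ → ℂ)).mulVec v = z • v := by
  set Mc := M.map (Complex.ofReal : ℝ → ℂ) with hMc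
  rw [spectrum.mem_iff] at hz
  rw [Matrix.isUnit_iff_isUnit_det] at hz
  rw [isUnit_iff_ne_zero, not_not] at hz
  rw [← Matrix.exists_mulVec_eq_zero_iff] at hz
  obtain ⟨v, hv0, hv⟩ := hz
  refine ⟨v, hv0, ?_⟩
  have : (algebraMap ℂ (Matrix (Fin n) (Fin n) ℂ)) z = z • (1 : Matrix (Fin n) (Fin n) ℂ) := by
    rw [Algebra.algebraMap_eq_smul_one]
  rw [this, Matrix.sub_mulVec, Matrix.smul_mulVec, Matrix.one_mulVec, sub_eq_zero] at hv
  exact hv.symm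

lemma mulVec_nonneg {M : Matrix (Fin n) (Fin n) ℝ} (hM : ∀ i j, 0 ≤ M i j)
    {x : Fin n → ℝ} (hx : ∀ i, 0 ≤ x i) : ∀ i, 0 ≤ M.mulVec x i := fun i => by
  simp only [Matrix.mulVec, dotProduct]
  exact Finset.sum_nonneg fun j _ => mul_nonneg (hM i j) (hx j)

lemma mulVec_mono {M : Matrix (Fin n) (Fin n) ℝ} (hM : ∀ i j, 0 ≤ M i j)
    {x y : Fin n → ℝ} (hxy : ∀ i, x i ≤ y i) : ∀ i, M.mulVec x i ≤ M.mulVec y i := fun i => by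
  simp only [Matrix.mulVec, dotProduct]
  exact Finset.sum_le_sum fun j _ => mul_le_mul_of_nonneg_left (hxy j) (hM i j)

lemma pow_nonneg_entries {M : Matrix (Fin n) (Fin n) ℝ} (hM : ∀ i j, 0 ≤ M i j) :
    ∀ k : ℕ, ∀ i j, 0 ≤ (M ^ k) i j := by
  intro k
  induction k with
  | zero => intro i j; simp [Matrix.one_apply]; split <;> norm_num
  | succ m ih =>
    intro i j
    rw [pow_succ, Matrix.mul_apply]
    exact Finset.sum_nonneg fun l _ => mul_nonneg (ih i l) (hM l j)

/-- From `specRad M > 1` get a nonnegative vector with `M v ≥ c v` for some `c > 1`. -/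

lemma exists_nonneg_subeigen {M : Matrix (Fin n) (Fin n) ℝ} (hM : ∀ i j, 0 ≤ M i j)
    (h1 : 1 < specRad M) :
    ∃ (c : ℝ) (v : Fin n → ℝ), 1 < c ∧ (∀ i, 0 ≤ v i) ∧ v ≠ 0 ∧
      ∀ i, c * v i ≤ M.mulVec v i := by
  obtain ⟨z, hz, hz1⟩ := exists_gt_of_specRad_gt zero_le_one h1
  obtain ⟨w, hw0, hw⟩ := exists_eigenvector hz
  refine ⟨‖z‖, fun i => ‖w i‖, hz1, fun i => (norm_nonneg _), ?_, ?_⟩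
  · intro h
    apply hw0
    funext i
    have := congrFun h i
    simp only [Pi.zero_apply] at this ⊢
    exact norm_eq_zero.mp this
  · intro i
    have hwi : (M.map (Complex.ofReal : ℝ → ℂ)).mulVec w i = z * w i := by
      rw [hw]; rfl
    have : ‖z‖ * ‖w i‖ = ‖(M.map (Complex.ofReal : ℝ → ℂ)).mulVec w i‖ := by
      rw [hwi, norm_mul]
    rw [this]
    have hexp : (M.map (Complex.ofReal : ℝ → ℂ)).mulVec w i = ∑ j, (M i j : ℂ) * w j := by
      simp [Matrix.mulVec, dotProduct, Matrix.map_apply]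
    rw [hexp]
    calc ‖∑ j, (M i j : ℂ) * w j‖ ≤ ∑ j, ‖(M i j : ℂ) * w j‖ := by
          exact norm_sum_le Finset.univ _
      _ = ∑ j, M i j * ‖w j‖ := by
          refine Finset.sum_congr rfl fun j _ => ?_
          rw [norm_mul, Complex.norm_real, Real.norm_of_nonneg (hM i j)]
      _ = M.mulVec (fun j => ‖w j‖) i := rfl

lemma exists_pos_superharmonic {M : Matrix (Fin n) (Fin n) ℝ} (hM : ∀ i j, 0 ≤ M i j)
    (hirr : MatIrreducible M) (h1 : 1 < specRad M) :
    ∃ w : Fin n → ℝ, (∀ i, 0 < w i) ∧ ∀ i, w i < M.mulVec w i := by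
  obtain ⟨c, v, hc, hv0, hvne, hsub⟩ := exists_nonneg_subeigen hM h1
  -- pick an index with v j0 > 0
  obtain ⟨j0, hj0⟩ : ∃ j0, 0 < v j0 := by
    by_contra h
    push_neg at h
    exact hvne (funext fun i => le_antisymm (h i) (hv0 i))
  -- choose K
  have hk : ∀ i : Fin n, ∃ k : ℕ, 1 ≤ k ∧ 0 < (M ^ k) i j0 := fun i => hirr i j0
  choose kf hkf1 hkfpos using hk
  set K : ℕ := Finset.univ.sup kf with hK
  set T : ℕ → Fin n → ℝ := fun k => (M ^ k).mulVec v with hT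
  have hTnn : ∀ k i, 0 ≤ T k i := fun k => mulVec_nonneg (pow_nonneg_entries hM k) hv0
  -- each T (k+1) ≥ c * T k
  have hstep : ∀ k i, c * T k i ≤ T (k + 1) i := by
    intro k i
    have e1 : T (k+1) = (M ^ k).mulVec (M.mulVec v) := by
      rw [hT]
      simp only []
      rw [pow_succ, ← Matrix.mulVec_mulVec]
    have e2 : (M ^ k).mulVec (fun j => c * v j) i ≤ (M ^ k).mulVec (M.mulVec v) i :=
      mulVec_mono (pow_nonneg_entries hM k) (fun j => hsub j) i
    have e3 : (M ^ k).mulVec (fun j => c * v j) i = c * T k i := by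
      rw [hT]
      simp only [Matrix.mulVec, dotProduct, Finset.mul_sum]
      exact Finset.sum_congr rfl fun j _ => by ring
    rw [e1]
    rw [← e3]
    exact e2
  set w : Fin n → ℝ := fun i => ∑ k ∈ Finset.range (K + 1), T k i with hw
  have hwpos : ∀ i, 0 < w i := by
    intro i
    rw [hw]
    apply Finset.sum_pos' (fun k _ => hTnn k i)
    refine ⟨kf i, Finset.mem_range.mpr (Nat.lt_succ_of_le (Finset.le_sup (Finset.mem_univ i))), ?_⟩
    -- T (kf i) i > 0
    have : (M ^ kf i) i j0 * v j0 ≤ T (kf i) i := by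
      rw [hT]
      simp only [Matrix.mulVec, dotProduct]
      have := Finset.single_le_sum (f := fun j => (M ^ kf i) i j * v j)
        (fun j _ => mul_nonneg (pow_nonneg_entries hM _ i j) (hv0 j)) (Finset.mem_univ j0)
      exact this
    have hpos : 0 < (M ^ kf i) i j0 * v j0 := mul_pos (hkfpos i) hj0
    linarith
  refine ⟨w, hwpos, fun i => ?_⟩
  have hMT : ∀ k, M.mulVec (T k) = T (k + 1) := by
    intro k
    rw [hT]
    simp only []
    rw [Matrix.mulVec_mulVec, ← pow_succ']
  have hMw : M.mulVec w i = ∑ k ∈ Finset.range (K + 1), T (k + 1) i := by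
    simp only [Matrix.mulVec, dotProduct, hw, Finset.mul_sum]
    rw [Finset.sum_comm]
    refine Finset.sum_congr rfl fun k _ => ?_
    have := congrFun (hMT k) i
    simp only [Matrix.mulVec, dotProduct] at this
    exact this
  have : c * w i ≤ ∑ k ∈ Finset.range (K + 1), T (k + 1) i := by
    rw [hw]
    simp only [Finset.mul_sum]
    exact Finset.sum_le_sum fun k _ => hstep k i
  rw [hMw]
  have hwi := hwpos i
  nlinarith

lemma one_le_specRad_of_superharmonic {M : Matrix (Fin n) (Fin n) ℝ} (hM : ∀ i j, 0 ≤ M i j)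
    {a : Fin n → ℝ} (ha0 : ∀ i, 0 ≤ a i) {j0 : Fin n} (hj0 : 0 < a j0)
    (hsup : ∀ i, a i ≤ M.mulVec a i) : 1 ≤ specRad M := by
  haveI : Nonempty (Fin n) := ⟨j0⟩
  set Mc := M.map (Complex.ofReal : ℝ → ℂ) with hMc
  -- M^k a ≥ a pointwise
  have hpow : ∀ k : ℕ, ∀ i, a i ≤ (M ^ k).mulVec a i := by
    intro k
    induction k with
    | zero => intro i; simp [Matrix.one_mulVec]
    | succ m ih =>
      intro i
      have e1 : (M ^ (m + 1)).mulVec a = (M ^ m).mulVec (M.mulVec a) := by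
        rw [pow_succ, ← Matrix.mulVec_mulVec]
      rw [e1]
      calc a i ≤ (M ^ m).mulVec a i := ih i
        _ ≤ (M ^ m).mulVec (M.mulVec a) i :=
          mulVec_mono (pow_nonneg_entries hM m) hsup i
  -- complex vector
  set ac : Fin n → ℂ := fun i => (a i : ℂ) with hac
  have hacnorm : 0 < ‖ac‖ := by
    have : ac ≠ 0 := by
      intro h
      have := congrFun h j0
      simp only [hac, Pi.zero_apply, Complex.ofReal_eq_zero] at this
      exact absurd this (ne_of_gt hj0)
    exact norm_pos_iff.mpr this
  have hMcpow : ∀ k : ℕ, Mc ^ k = (M ^ k).map (Complex.ofReal : ℝ → ℂ) := by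
    intro k
    have := map_pow (Complex.ofRealHom.mapMatrix (m := Fin n)) M k
    exact this.symm
  -- lower bound on norms of powers
  have hnormlb : ∀ k : ℕ, a j0 / ‖ac‖ ≤ ‖Mc ^ k‖ := by
    intro k
    have hmv : (Mc ^ k).mulVec ac = fun i => (((M ^ k).mulVec a i : ℝ) : ℂ) := by
      funext i
      rw [hMcpow k]
      simp [Matrix.mulVec, dotProduct, Matrix.map_apply, hac]
    have h1 : a j0 ≤ ‖(Mc ^ k).mulVec ac‖ := by
      calc a j0 ≤ (M ^ k).mulVec a j0 := hpow k j0
        _ ≤ ‖((Mc ^ k).mulVec ac) j0‖ := by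
            rw [hmv]
            simp only [Complex.norm_real]
            exact le_abs_self _
        _ ≤ ‖(Mc ^ k).mulVec ac‖ := norm_le_pi_norm _ j0
    have h2 : ‖(Mc ^ k).mulVec ac‖ ≤ ‖Mc ^ k‖ * ‖ac‖ := Matrix.linfty_opNorm_mulVec _ _
    rw [div_le_iff₀ hacnorm]
    linarith
  -- Gelfand's formula
  have hgel := spectrum.pow_norm_pow_one_div_tendsto_nhds_spectralRadius Mc
  set r : ENNReal := spectralRadius ℂ Mc with hr
  have hrtop : r ≠ ⊤ :=
    ne_top_of_le_ne_top ENNReal.coe_ne_top (spectrum.spectralRadius_le_nnnorm (𝕜 := ℂ) Mc)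
  have hreal : Tendsto (fun k : ℕ => ‖Mc ^ k‖ ^ (1 / (k : ℝ))) atTop (𝓝 r.toReal) := by
    have := (ENNReal.tendsto_toReal hrtop).comp hgel
    refine this.congr fun k => ?_
    simp only [Function.comp_apply]
    exact ENNReal.toReal_ofReal (Real.rpow_nonneg (norm_nonneg _) _)
  set c0 : ℝ := a j0 / ‖ac‖ with hc0
  have hc0pos : 0 < c0 := div_pos hj0 hacnorm
  have hlow : Tendsto (fun k : ℕ => c0 ^ (1 / (k : ℝ))) atTop (𝓝 1) := by
    have h0 : Tendsto (fun k : ℕ => 1 / (k : ℝ)) atTop (𝓝 0) :=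
      tendsto_one_div_atTop_nhds_zero_nat
    have := (Real.continuousAt_const_rpow (ne_of_gt hc0pos)).tendsto.comp h0
    simpa [Real.rpow_zero, Function.comp_def] using this
  have hle : 1 ≤ r.toReal := by
    refine le_of_tendsto_of_tendsto' hlow hreal fun k => ?_
    exact Real.rpow_le_rpow (le_of_lt hc0pos) (hnormlb k)
      (by positivity)
  -- spectral radius bounds specRad
  have hfin : r ≤ ENNReal.ofReal (specRad M) := by
    rw [hr, spectralRadius]
    refine iSup₂_le fun z hz => ?_
    show ‖z‖ₑ ≤ _
    rw [← ofReal_norm]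
    exact ENNReal.ofReal_le_ofReal (by
      exact abs_le_specRad hz)
  have hsr0 : 0 ≤ specRad M := Real.sSup_nonneg (by
    rintro x ⟨z, _, rfl⟩; exact norm_nonneg z)
  have := ENNReal.toReal_mono (by simp) hfin
  rw [ENNReal.toReal_ofReal hsr0] at this
  linarith

lemma hasDerivAt_line (u : (Fin n → ℝ) → ℝ) (hd : ContDiff ℝ 1 u) (w : Fin n → ℝ) :
    HasDerivAt (fun t : ℝ => u (t • w)) (fderiv ℝ u 0 w) 0 := by
  have hF : HasFDerivAt u (fderiv ℝ u 0) ((fun t : ℝ => t • w) 0) := by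
    simp only [zero_smul]
    exact (hd.differentiable one_ne_zero 0).hasFDerivAt
  have hl : HasDerivAt (fun t : ℝ => t • w) w 0 := by
    simpa using (hasDerivAt_id (0 : ℝ)).smul_const w
  exact hF.comp_hasDerivAt 0 hl

lemma fderiv_apply_sum (u : (Fin n → ℝ) → ℝ) (a w : Fin n → ℝ) :
    fderiv ℝ u a w = ∑ k, w k * (fderiv ℝ u a (Pi.single k 1)) := by
  have hw : w = ∑ k, w k • (Pi.single k (1 : ℝ) : Fin n → ℝ) := by
    funext j
    simp [Pi.single_apply, Finset.sum_apply]
  conv_lhs => rw [hw]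
  rw [map_sum]
  exact Finset.sum_congr rfl fun k _ => by rw [_root_.map_smul]; rfl

lemma concave_slope_le (u : (Fin n → ℝ) → ℝ) (hconc : ConcaveOn ℝ (nonnegOrthant n) u)
    (hd : ContDiff ℝ 1 u) {a : Fin n → ℝ} (ha : ∀ i, 0 ≤ a i) :
    u a - u 0 ≤ fderiv ℝ u 0 a := by
  have hder := hasDerivAt_line u hd a
  have hslope : Tendsto (slope (fun t : ℝ => u (t • a)) 0) (𝓝[>] 0)
      (𝓝 (fderiv ℝ u 0 a)) :=
    (hasDerivAt_iff_tendsto_slope.mp hder).mono_left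
      (nhdsWithin_mono 0 fun x hx => ne_of_gt hx)
  refine ge_of_tendsto hslope ?_
  filter_upwards [Ioo_mem_nhdsGT_of_mem (Set.left_mem_Ico.mpr one_pos)] with t ht
  have h0 : (0 : Fin n → ℝ) ∈ nonnegOrthant n := fun i => le_rfl
  have hcomb := hconc.2 h0 ha (by linarith [ht.2] : (0:ℝ) ≤ 1 - t) (le_of_lt ht.1)
    (by ring)
  have hcomb' : (1 - t) * u 0 + t * u a ≤ u (t • a) := by
    simpa [smul_zero] using hcomb
  have ht0 : (0:ℝ) < t := ht.1
  rw [slope_def_field]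
  rw [sub_zero, zero_smul, le_div_iff₀ ht0]
  nlinarith [hcomb']

lemma pos_deriv_eventually (u : (Fin n → ℝ) → ℝ) (hd : ContDiff ℝ 1 u) (w : Fin n → ℝ)
    (hpos : 0 < fderiv ℝ u 0 w) : ∀ᶠ t in 𝓝[>] (0:ℝ), u 0 < u (t • w) := by
  have hder := hasDerivAt_line u hd w
  have hslope : Tendsto (slope (fun t : ℝ => u (t • w)) 0) (𝓝[>] 0)
      (𝓝 (fderiv ℝ u 0 w)) :=
    (hasDerivAt_iff_tendsto_slope.mp hder).mono_left
      (nhdsWithin_mono 0 fun x hx => ne_of_gt hx)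
  have hev : ∀ᶠ t in 𝓝[>] (0:ℝ), 0 < slope (fun t : ℝ => u (t • w)) 0 t :=
    hslope.eventually (eventually_gt_nhds hpos)
  filter_upwards [hev, self_mem_nhdsWithin] with t hts htpos
  rw [slope_def_field, sub_zero, zero_smul] at hts
  have h := mul_pos hts (show (0:ℝ) < t from htpos)
  rw [div_mul_cancel₀ _ (ne_of_gt htpos)] at h
  linarith

lemma sum_ite_diag (f : Fin n → ℝ) (j : Fin n) :
    ∑ k, (if j = k then 0 else f k) = (∑ k, f k) - f j := by
  have : ∀ k : Fin n, (if j = k then 0 else f k) = f k - (if j = k then f k else 0) := by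
    intro k; split <;> simp
  rw [Finset.sum_congr rfl fun k _ => this k, Finset.sum_sub_distrib, Finset.sum_ite_eq]
  simp

lemma Bmat_dot (u : Fin n → (Fin n → ℝ) → ℝ) (a : Fin n → ℝ) (x : Fin n → ℝ) (j : Fin n)
    (hj : Jmat u a j j < 0) :
    ∑ k, Bmat u a j k * x k
      = ((∑ k, Jmat u a j k * x k) - Jmat u a j j * x j) / (- Jmat u a j j) := by
  have : ∀ k, Bmat u a j k * x k
      = (if j = k then 0 else Jmat u a j k * x k) / (- Jmat u a j j) := by
    intro k
    simp only [Bmat, Matrix.of_apply]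
    split
    · next h => subst h; simp
    · ring
  rw [Finset.sum_congr rfl fun k _ => this k, ← Finset.sum_div, sum_ite_diag]

end Helpers

/-- Essential agents: if `r(B(0)) > 1` but the spectral radius of the matrix
obtained by zeroing out row and column `i` is `< 1`, then a Pareto
improvement on `0` exists, but none exists once agent `i`'s action is fixed
at `0`. -/
theorem stmt14 {n : ℕ} (hn : 1 ≤ n)
    (u : Fin n → (Fin n → ℝ) → ℝ)
    (hconc : ∀ i, ConcaveOn ℝ (nonnegOrthant n) (u i))
    (hdiff : ∀ i, ContDiff ℝ 1 (u i))
    (hCA : ∀ a ∈ nonnegOrthant n, ∀ i, Jmat u a i i < 0)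
    (hPE : ∀ a ∈ nonnegOrthant n, ∀ i j, i ≠ j → 0 ≤ Jmat u a i j)
    (hirr : ∀ a ∈ nonnegOrthant n, MatIrreducible (Bmat u a))
    (i : Fin n)
    (h1 : 1 < specRad (Bmat u (0 : Fin n → ℝ)))
    (h2 : specRad (Matrix.of fun j k =>
        if j = i ∨ k = i then 0 else Bmat u (0 : Fin n → ℝ) j k) < 1) :
    (∃ a : Fin n → ℝ, (∀ j, 0 ≤ a j) ∧
        (∀ j, u j (0 : Fin n → ℝ) ≤ u j a) ∧ ∃ j, u j (0 : Fin n → ℝ) < u j a) ∧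
    ¬ ∃ a : Fin n → ℝ, (∀ j, 0 ≤ a j) ∧ a i = 0 ∧
        (∀ j, j ≠ i → u j (0 : Fin n → ℝ) ≤ u j a) ∧
        ∃ j, j ≠ i ∧ u j (0 : Fin n → ℝ) < u j a := by
  have h0orth : (0 : Fin n → ℝ) ∈ nonnegOrthant n := fun k => le_rfl
  set B : Matrix (Fin n) (Fin n) ℝ := Bmat u (0 : Fin n → ℝ) with hB
  have hBnn : ∀ j k, 0 ≤ B j k := by
    intro j k
    rw [hB]
    simp only [Bmat, Matrix.of_apply]
    split
    · exact le_rfl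
    · next h =>
      exact div_nonneg (hPE 0 h0orth j k h) (by linarith [hCA 0 h0orth j])
  constructor
  · -- part (a)
    obtain ⟨w, hwpos, hwsup⟩ := exists_pos_superharmonic hBnn (hirr 0 h0orth) h1
    have hder : ∀ j, 0 < fderiv ℝ (u j) 0 w := by
      intro j
      have hmv : B.mulVec w j = ∑ k, B j k * w k := by
        simp [Matrix.mulVec, dotProduct]
      have hJj := hCA 0 h0orth j
      have := hwsup j
      rw [hmv, hB, Bmat_dot u 0 w j hJj] at this
      rw [lt_div_iff₀ (by linarith : (0:ℝ) < - Jmat u 0 j j)] at this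
      rw [fderiv_apply_sum]
      have hsumeq : ∑ k, w k * fderiv ℝ (u j) 0 (Pi.single k 1)
          = ∑ k, Jmat u 0 j k * w k := by
        refine Finset.sum_congr rfl fun k _ => ?_
        simp only [Jmat, Matrix.of_apply]
        ring
      rw [hsumeq]
      nlinarith
    have hev : ∀ᶠ t in 𝓝[>] (0:ℝ), ∀ j, u j 0 < u j (t • w) :=
      eventually_all.mpr fun j => pos_deriv_eventually (u j) (hdiff j) w (hder j)
    obtain ⟨t, hall, htpos⟩ := (hev.and self_mem_nhdsWithin).exists
    refine ⟨t • w, fun j => mul_nonneg (le_of_lt htpos) (le_of_lt (hwpos j)), ?_, ?_⟩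
    · exact fun j => le_of_lt (hall j)
    · exact ⟨⟨0, hn⟩, hall _⟩
  · -- part (b)
    rintro ⟨a, ha0, hai, hge, j0, hj0ne, hj0lt⟩
    have haorth : a ∈ nonnegOrthant n := ha0
    have hd : ∀ j, j ≠ i → u j a - u j 0 ≤ fderiv ℝ (u j) 0 a :=
      fun j _ => concave_slope_le (u j) (hconc j) (hdiff j) ha0
    have hdsum : ∀ j, fderiv ℝ (u j) 0 a = ∑ k, Jmat u 0 j k * a k := by
      intro j
      rw [fderiv_apply_sum]
      refine Finset.sum_congr rfl fun k _ => ?_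
      simp only [Jmat, Matrix.of_apply]
      ring
    set B' : Matrix (Fin n) (Fin n) ℝ :=
      Matrix.of fun j k => if j = i ∨ k = i then 0 else B j k with hB'
    have hB'nn : ∀ j k, 0 ≤ B' j k := by
      intro j k
      rw [hB']
      simp only [Matrix.of_apply]
      split
      · exact le_rfl
      · exact hBnn j k
    have hsup : ∀ j, a j ≤ B'.mulVec a j := by
      intro j
      have hmv : B'.mulVec a j = ∑ k, B' j k * a k := by
        simp [Matrix.mulVec, dotProduct]
      rw [hmv]
      by_cases hji : j = i
      · subst hji
        have : ∀ k, B' j k * a k = 0 := by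
          intro k
          rw [hB']
          simp
        rw [Finset.sum_congr rfl fun k _ => this k]
        simp [hai]
      · have hterm : ∀ k, B' j k * a k = B j k * a k := by
          intro k
          by_cases hki : k = i
          · subst hki; rw [hai]; ring
          · rw [hB']
            simp only [Matrix.of_apply]
            rw [if_neg (by tauto)]
        rw [Finset.sum_congr rfl fun k _ => hterm k]
        have hJj := hCA 0 h0orth j
        rw [hB, Bmat_dot u 0 a j hJj]
        rw [le_div_iff₀ (by linarith : (0:ℝ) < - Jmat u 0 j j)]
        have h1' : 0 ≤ fderiv ℝ (u j) 0 a := le_trans (by linarith [hge j hji]) (hd j hji)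
        rw [hdsum j] at h1'
        nlinarith
    have hane : ∃ jp, 0 < a jp := by
      by_contra h
      push_neg at h
      have haz : a = 0 := funext fun k => le_antisymm (h k) (ha0 k)
      have := hd j0 hj0ne
      rw [haz] at hj0lt
      linarith
    obtain ⟨jp, hjp⟩ := hane
    have := one_le_specRad_of_superharmonic hB'nn ha0 hjp hsup
    rw [hB'] at this
    rw [hB] at this
    linarith
end
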